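/- Suppose Ω carries a probability measure P, measurable potential outcomes ω ↦ D_c(ω) for each assignment c : C → {0,1}, a measurable observed exposure map ω ↦ C(ω), and observed outcome D(ω) := D_{C(ω)}(ω) (consistency). Let B be a conjunction of literals with domain all of C (|B| = |C|) and target assignment b : C → {0,1}, and suppose the exposures are unconfounded for D: for every pair of assignments c, c′ with P(C = c′) > 0, P(D_c = 1 | C = c′) = P(D_c = 1). Then PNS(D,B) := P({ω : D_b(ω) = 1 and D_c(ω) = 0 for every c ≠ b}) satisfies PNS(D,B) ≥ E[D | C = b] − Σ_{c ≠ b} E[D | C = c], where each conditioning event is assumed to have positive probability and E[D | E] = P(D = 1 | E). -/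

import Mathlib

/-- An assignment of values to the binary causes indexed by `ι`. -/
abbrev Assign (ι : Type*) := ι → Bool

/-- A conjunction of literals over `ι`: a partial assignment, where `B i = some v`
means the literal at coordinate `i` has target value `v`, and `B i = none` means
`i` is not in the domain of the conjunction. -/
abbrev Conj (ι : Type*) := ι → Option Bool

/-- An assignment `c` satisfies a conjunction of literals `B`. -/
def Satisfies {ι : Type*} (c : Assign ι) (B : Conj ι) : Prop :=
  ∀ i v, B i = some v → c i = v

/-- `B'` extends `B` : the domain of `B'` contains that of `B` and they agree there. -/
def ConjExtends {ι : Type*} (B B' : Conj ι) : Prop :=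
  ∀ i v, B i = some v → B' i = some v

/-- `(A, 𝔅)` is a sufficient cause representation for the family of potential
outcomes `D`. -/
def IsRepresentation {ι Ω : Type*} (D : Ω → Assign ι → Bool)
    {p : ℕ} (A : Fin p → Ω → Bool) (𝔅 : Fin p → Conj ι) : Prop :=
  ∀ (ω : Ω) (c : Assign ι),
    D ω c = true ↔ ∃ j, A j ω = true ∧ Satisfies c (𝔅 j)

/-- `B` is irreducible for `D(C, Ω)`: every sufficient cause representation
contains some conjunction extending `B`. -/
def IrreducibleConj {ι Ω : Type*} (D : Ω → Assign ι → Bool) (B : Conj ι) : Prop :=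
  ∀ (p : ℕ) (A : Fin p → Ω → Bool) (𝔅 : Fin p → Conj ι),
    IsRepresentation D A 𝔅 → ∃ j, ConjExtends B (𝔅 j)

/-- `B` is a sufficient cause for `D` for the individual `ω`. -/
def SuffCauseFor {ι Ω : Type*} (D : Ω → Assign ι → Bool) (B : Conj ι) (ω : Ω) : Prop :=
  ∀ c : Assign ι, Satisfies c B → D ω c = true

/-- `B` is a minimal sufficient cause for `D` for `ω`: it is a sufficient cause,
but no restriction of `B` to a proper subset of its domain is. -/
def MinSuffCauseFor {ι Ω : Type*} (D : Ω → Assign ι → Bool) (B : Conj ι) (ω : Ω) : Prop :=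
  SuffCauseFor D B ω ∧
    ∀ B' : Conj ι, ConjExtends B' B → B' ≠ B → ¬ SuffCauseFor D B' ω

/-- `B` is a singular (minimal sufficient) cause for `ω`: it is the unique minimal
sufficient cause for `ω`. -/
def SingularFor {ι Ω : Type*} (D : Ω → Assign ι → Bool) (B : Conj ι) (ω : Ω) : Prop :=
  MinSuffCauseFor D B ω ∧ ∀ B' : Conj ι, B' ≠ B → ¬ MinSuffCauseFor D B' ω

/-- `B` is singular for `D(C, Ω)`: it is singular for some individual. -/
def Singular {ι Ω : Type*} (D : Ω → Assign ι → Bool) (B : Conj ι) : Prop :=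
  ∃ ω : Ω, SingularFor D B ω

/-- The literal at coordinate `i` with target value `v` has a positive monotonic
effect on `D` relative to `C`. -/
def PosMonotone {ι Ω : Type*} [DecidableEq ι] (D : Ω → Assign ι → Bool)
    (i : ι) (v : Bool) : Prop :=
  ∀ (ω : Ω) (c : Assign ι),
    D ω (Function.update c i (!v)) = true → D ω (Function.update c i v) = true

/-- `T` is a tree on the finite vertex set `V`: a set of unordered pairs of
distinct elements of `V` with `|T| = |V| - 1` such that any two vertices of `V`
are connected by a path of edges of `T`. -/
def IsTreeOn {ι : Type*} (V : Finset ι) (T : Finset (Sym2 ι)) : Prop :=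
  (∀ e ∈ T, ¬ e.IsDiag ∧ ∀ i ∈ e, i ∈ V) ∧
  T.card = V.card - 1 ∧
  (∀ x ∈ V, ∀ y ∈ V, Relation.ReflTransGen (fun a b => s(a, b) ∈ T) x y)


open MeasureTheory ProbabilityTheory

/-- Proposition 5.4: lower bound on the probability of necessity
and sufficiency under no confounding. -/
theorem pns_lower_bound {ι Ω : Type*} [Fintype ι] [DecidableEq ι] [Nonempty ι]
    [MeasurableSpace Ω]
    (P : Measure Ω) [IsProbabilityMeasure P]
    (D : Ω → Assign ι → Bool) (Cobs : Ω → Assign ι)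
    (hD : ∀ c : Assign ι, Measurable fun ω => D ω c)
    (hC : Measurable Cobs)
    (b : Assign ι)
    (hunconf : ∀ c c' : Assign ι, P {ω | Cobs ω = c'} ≠ 0 →
      (ProbabilityTheory.cond P {ω | Cobs ω = c'}) {ω | D ω c = true}
        = P {ω | D ω c = true})
    (hpos : ∀ c : Assign ι, P {ω | Cobs ω = c} ≠ 0) :
    ((ProbabilityTheory.cond P {ω | Cobs ω = b}) {ω | D ω (Cobs ω) = true}).toReal
      - ∑ c ∈ Finset.univ.filter (fun c : Assign ι => c ≠ b),
          ((ProbabilityTheory.cond P {ω | Cobs ω = c}) {ω | D ω (Cobs ω) = true}).toReal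
      ≤ (P {ω | D ω b = true ∧ ∀ c : Assign ι, c ≠ b → D ω c = false}).toReal := by
  classical
  have hsing : ∀ c : Assign ι, MeasurableSet {ω | Cobs ω = c} := fun c =>
    hC (measurableSet_singleton c)
  have hcond : ∀ c : Assign ι,
      (ProbabilityTheory.cond P {ω | Cobs ω = c}) {ω | D ω (Cobs ω) = true}
        = P {ω | D ω c = true} := by
    intro c
    have h1 : (ProbabilityTheory.cond P {ω | Cobs ω = c}) {ω | D ω (Cobs ω) = true}
        = (ProbabilityTheory.cond P {ω | Cobs ω = c}) {ω | D ω c = true} := by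
      have hset : {ω | Cobs ω = c} ∩ {ω | D ω (Cobs ω) = true}
          = {ω | Cobs ω = c} ∩ {ω | D ω c = true} := by
        ext ω
        simp only [Set.mem_inter_iff, Set.mem_setOf_eq]
        constructor
        · rintro ⟨h, h2⟩; rw [h] at h2; exact ⟨h, h2⟩
        · rintro ⟨h, h2⟩; rw [h]; exact ⟨rfl, h2⟩
      rw [ProbabilityTheory.cond_apply (hsing c), ProbabilityTheory.cond_apply (hsing c), hset]
    rw [h1, hunconf c c (hpos c)]
  rw [hcond b, Finset.sum_congr rfl (fun c _ => by rw [hcond c])]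
  set A := {ω | D ω b = true}
  set T := {ω | D ω b = true ∧ ∀ c : Assign ι, c ≠ b → D ω c = false}
  have hsub : A ⊆ T ∪ ⋃ c ∈ Finset.univ.filter (fun c : Assign ι => c ≠ b),
      {ω | D ω c = true} := by
    intro ω hω
    by_cases h : ∃ c : Assign ι, c ≠ b ∧ D ω c = true
    · obtain ⟨c, hc, hDc⟩ := h
      exact Or.inr (Set.mem_biUnion (Finset.mem_filter.2 ⟨Finset.mem_univ _, hc⟩) hDc)
    · push_neg at h
      exact Or.inl ⟨hω, fun c hc => by
        cases hb : D ω c with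
        | false => rfl
        | true => exact absurd hb (h c hc)⟩
  have hle : P A ≤ P T + ∑ c ∈ Finset.univ.filter (fun c : Assign ι => c ≠ b),
      P {ω | D ω c = true} := by
    calc P A ≤ P (T ∪ ⋃ c ∈ Finset.univ.filter (fun c : Assign ι => c ≠ b),
        {ω | D ω c = true}) := measure_mono hsub
      _ ≤ P T + P (⋃ c ∈ Finset.univ.filter (fun c : Assign ι => c ≠ b),
        {ω | D ω c = true}) := measure_union_le _ _
      _ ≤ _ := add_le_add le_rfl (measure_biUnion_finset_le _ _)
  have hAr : (P A).toReal ≤ (P T).toReal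
      + ∑ c ∈ Finset.univ.filter (fun c : Assign ι => c ≠ b),
        (P {ω | D ω c = true}).toReal := by
    have h2 := ENNReal.toReal_mono (by
      refine ENNReal.add_ne_top.2 ⟨measure_ne_top _ _, ?_⟩
      exact (ENNReal.sum_lt_top.2 (fun c _ => (measure_lt_top P _))).ne) hle
    rwa [ENNReal.toReal_add (measure_ne_top _ _)
      (ENNReal.sum_lt_top.2 (fun c _ => (measure_lt_top P _))).ne,
      ENNReal.toReal_sum (fun c _ => measure_ne_top _ _)] at h2
  linarith
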